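/- In an extending UC module M, the intersection of any two direct summands K, L with K + L = M is a direct summand of M; that is, M satisfies (D3). -/

import Mathlib

universe u v

/-- `N` is a small (superfluous) submodule of `M`. -/
def SmallSub (R : Type v) [Ring R] {M : Type u} [AddCommGroup M] [Module R M]
    (N : Submodule R M) : Prop :=
  ∀ X : Submodule R M, N ⊔ X = ⊤ → X = ⊤

/-- `D` is a direct summand of `M`. -/
def IsDirectSummand (R : Type v) [Ring R] {M : Type u} [AddCommGroup M] [Module R M]
    (D : Submodule R M) : Prop :=
  ∃ D' : Submodule R M, IsCompl D D'

/-- `M` is H-supplemented: for every submodule `X` there is a direct summand `D`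
with `(X+D)/D ≪ M/D` and `(X+D)/X ≪ M/X`. -/
def HSupplemented (R : Type v) [Ring R] (M : Type u) [AddCommGroup M] [Module R M] : Prop :=
  ∀ X : Submodule R M, ∃ D : Submodule R M, IsDirectSummand R D ∧
    SmallSub R ((X ⊔ D).map D.mkQ) ∧ SmallSub R ((X ⊔ D).map X.mkQ)

/-- Condition (D3). -/
def CondD3 (R : Type v) [Ring R] (M : Type u) [AddCommGroup M] [Module R M] : Prop :=
  ∀ K L : Submodule R M, IsDirectSummand R K → IsDirectSummand R L → K ⊔ L = ⊤ →
    IsDirectSummand R (K ⊓ L)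

/-- `N` is essential in the submodule `C` (both submodules of `M`, `N ≤ C`). -/
def EssIn (R : Type v) [Ring R] {M : Type u} [AddCommGroup M] [Module R M]
    (N C : Submodule R M) : Prop :=
  N ≤ C ∧ ∀ X : Submodule R M, X ≤ C → N ⊓ X = ⊥ → X = ⊥

/-- `C` is a closed submodule of `M`: it has no proper essential extension in `M`. -/
def ClosedSub (R : Type v) [Ring R] {M : Type u} [AddCommGroup M] [Module R M]
    (C : Submodule R M) : Prop :=
  ∀ X : Submodule R M, EssIn R C X → X = C

/-- `C` is a closure of `N` in `M`. -/
def IsClosure (R : Type v) [Ring R] {M : Type u} [AddCommGroup M] [Module R M]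
    (N C : Submodule R M) : Prop :=
  EssIn R N C ∧ ClosedSub R C

/-- `M` is a UC module: every submodule has a unique closure. -/
def UCModule (R : Type v) [Ring R] (M : Type u) [AddCommGroup M] [Module R M] : Prop :=
  ∀ N : Submodule R M, ∃! C : Submodule R M, IsClosure R N C

/-- `M` is extending: every submodule is essential in a direct summand. -/
def Extending (R : Type v) [Ring R] (M : Type u) [AddCommGroup M] [Module R M] : Prop :=
  ∀ N : Submodule R M, ∃ D : Submodule R M, IsDirectSummand R D ∧ EssIn R N D

/-- `M` is extending (closed-submodule form): every closed submodule is a direct summand. -/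
def ExtendingClosed (R : Type v) [Ring R] (M : Type u) [AddCommGroup M] [Module R M] : Prop :=
  ∀ C : Submodule R M, ClosedSub R C → IsDirectSummand R C


section Aux

variable {R : Type v} [Ring R] {M : Type u} [AddCommGroup M] [Module R M]

lemma essIn_trans {A B C : Submodule R M} (hAB : EssIn R A B) (hBC : EssIn R B C) :
    EssIn R A C := by
  refine ⟨hAB.1.trans hBC.1, fun X hXC hAX => ?_⟩
  have hBX : B ⊓ X = ⊥ := by
    apply hAB.2 (B ⊓ X) inf_le_left
    rw [← inf_assoc, inf_eq_left.mpr hAB.1, hAX]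
  exact hBC.2 X hXC hBX

lemma closure_absorbs (huc : UCModule R M) {A C Y : Submodule R M}
    (hC : IsClosure R A C) (hY : EssIn R A Y) : Y ≤ C := by
  obtain ⟨G, hG, -⟩ := huc Y
  have hAG : IsClosure R A G := ⟨essIn_trans hY hG.1, hG.2⟩
  obtain ⟨C₀, -, hu⟩ := huc A
  have hGC : G = C := (hu G hAG).trans (hu C hC).symm
  exact hGC ▸ hG.1.1

lemma closure_le_of_isCompl (huc : UCModule R M) {K K' A C : Submodule R M}
    (hK : IsCompl K K') (hAK : A ≤ K) (hC : IsClosure R A C) : C ≤ K := by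
  set π : M →ₗ[R] M := K.subtype ∘ₗ (K.linearProjOfIsCompl K' hK) with hπ
  have hπK : ∀ x, π x ∈ K := fun x => (K.linearProjOfIsCompl K' hK x).2
  have hfix : ∀ x ∈ K, π x = x := by
    intro x hx
    have := Submodule.linearProjOfIsCompl_apply_left hK ⟨x, hx⟩
    exact congrArg Subtype.val this
  have hzero : ∀ x ∈ K', π x = 0 := by
    intro x hx
    have := Submodule.linearProjOfIsCompl_apply_right hK ⟨x, hx⟩
    exact congrArg Subtype.val this
  have hsub : ∀ x, x - π x ∈ K' := by
    intro x
    obtain ⟨k, hk, k', hk', hsum⟩ :=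
      Submodule.mem_sup.mp (hK.sup_eq_top ▸ Submodule.mem_top : x ∈ K ⊔ K')
    have hx : π x = k := by
      rw [← hsum, map_add, hfix k hk, hzero k' hk', add_zero]
    rw [hx, ← hsum]
    simpa using hk'
  have hCK' : C ⊓ K' = ⊥ := by
    apply hC.1.2 _ inf_le_left
    rw [eq_bot_iff]
    rintro x ⟨hxA, -, hxK'⟩
    have : x ∈ K ⊓ K' := ⟨hAK hxA, hxK'⟩
    rw [hK.inf_eq_bot] at this
    exact this
  set D := C.map π with hD
  have hAD : A ≤ D := fun a ha => ⟨a, hC.1.1 ha, hfix a (hAK ha)⟩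
  have hDK : D ≤ K := by
    rintro x ⟨c, hc, rfl⟩
    exact hπK c
  have hAessD : EssIn R A D := by
    refine ⟨hAD, fun X hXD hAX => ?_⟩
    have hY : ((X ⊔ K') ⊓ C) = ⊥ := by
      apply hC.1.2 _ inf_le_right
      rw [eq_bot_iff]
      rintro a ⟨haA, haXK', -⟩
      obtain ⟨x, hx, k', hk', hsum⟩ := Submodule.mem_sup.mp haXK'
      have hax : a = x := by
        have h1 : π a = a := hfix a (hAK haA)
        have h2 : π a = x := by
          rw [← hsum, map_add, hfix x (hDK (hXD hx)), hzero k' hk', add_zero]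
        rw [← h1, h2]
      have : a ∈ A ⊓ X := ⟨haA, hax ▸ hx⟩
      rw [hAX] at this
      exact this
    rw [eq_bot_iff]
    intro x hx
    obtain ⟨c, hc, rfl⟩ := hXD hx
    have hcY : c ∈ (X ⊔ K') ⊓ C := by
      refine ⟨Submodule.mem_sup.mpr ⟨π c, hx, c - π c, hsub c, by abel⟩, hc⟩
    rw [hY] at hcY
    rw [(Submodule.mem_bot R).mp hcY]
    simp
  have hDC : D ≤ C := closure_absorbs huc hC hAessD
  intro c hc
  have h1 : π c ∈ C := hDC ⟨c, hc, rfl⟩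
  have h2 : c - π c ∈ C ⊓ K' := ⟨sub_mem hc h1, hsub c⟩
  rw [hCK'] at h2
  have hcπ : c = π c := by
    have := (Submodule.mem_bot R).mp h2
    rwa [sub_eq_zero] at this
  rw [hcπ]
  exact hπK c

end Aux

theorem stmt4 {R : Type v} [Ring R] {M : Type u} [AddCommGroup M] [Module R M]
    (hext : ExtendingClosed R M) (huc : UCModule R M) : CondD3 R M := by
  rintro K L ⟨K', hK⟩ ⟨L', hL⟩ -
  obtain ⟨C, hC, -⟩ := huc (K ⊓ L)
  have h1 : C ≤ K := closure_le_of_isCompl huc hK inf_le_left hC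
  have h2 : C ≤ L := closure_le_of_isCompl huc hL inf_le_right hC
  have hCA : C = K ⊓ L := le_antisymm (le_inf h1 h2) hC.1.1
  exact hext _ (hCA ▸ hC.2)
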